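/- For all compact lists u, v ∈ L, the element u ↑̄ v of k⟨L⟩ is a k-linear combination of compact lists; consequently the k-submodule of k⟨L⟩ spanned by the compact lists is a unital subalgebra of (k⟨L⟩, ↑̄) with unit the empty list []. -/

import Mathlib

open scoped TensorProduct

/-- A monomial: a nonzero finitely supported multi-index with support contained in `{1,2,…}`. -/
def Mon : Type := {m : ℕ →₀ ℕ // m ≠ 0 ∧ m 0 = 0}

namespace Mon

/-- Product of monomials: pointwise addition of multi-indices. -/
noncomputable instance : Mul Mon :=
  ⟨fun a b =>
    ⟨a.1 + b.1, by
      constructor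
      · intro h
        exact a.2.1 ((add_eq_zero.mp h).1)
      · simp [Finsupp.add_apply, a.2.2, b.2.2]⟩⟩

/-- The total degree (weight) of a monomial. -/
def w (m : Mon) : ℕ := m.1.sum fun _ v => v

/-- The set of variable indices occurring in a list of monomials. -/
def IndAlph (l : List Mon) : Finset ℕ := (l.map fun m => m.1.support).foldr (· ∪ ·) ∅

/-- The maximal variable index occurring in a list of monomials (`0` for the empty list). -/
def maxInd (l : List Mon) : ℕ := (IndAlph l).sup id

/-- The embedding `i ↦ i + p` of `ℕ` into itself. -/
def addEmb (p : ℕ) : ℕ ↪ ℕ := ⟨fun i => i + p, fun a b h => by simpa using h⟩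

/-- The shift `T_p` of a monomial: translate the support by `p`. -/
noncomputable def Tmon (p : ℕ) (m : Mon) : Mon :=
  ⟨m.1.embDomain (addEmb p), by
    refine ⟨fun h => m.2.1 (Finsupp.embDomain_eq_zero.mp h), ?_⟩
    by_cases hp : p = 0
    · subst hp
      have h0 : (Finsupp.embDomain (addEmb 0) m.1) ((addEmb 0) 0) = m.1 0 :=
        Finsupp.embDomain_apply_self _ _ _
      simpa [addEmb] using h0.trans m.2.2
    · apply Finsupp.embDomain_notin_range
      rintro ⟨i, hi⟩
      simp only [addEmb, Function.Embedding.coeFn_mk] at hi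
      have hi' : i + p = 0 := hi
      omega⟩

/-- Shifted concatenation of lists of monomials. -/
noncomputable def sconc (l₁ l₂ : List Mon) : List Mon := l₁ ++ l₂.map (Tmon (maxInd l₁))

/-- A list of monomials is compact when its alphabet has no holes:
`IndAlph l = {1,…,card (IndAlph l)}`. -/
def Compact (l : List Mon) : Prop := IndAlph l = Finset.Icc 1 (IndAlph l).card

/-- The re-indexing function of a list `l` : on `IndAlph l` it is the unique strictly
increasing bijection onto `{1,…,card (IndAlph l)}` (extended injectively elsewhere). -/
noncomputable def phi (l : List Mon) (i : ℕ) : ℕ :=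
  if h : i ∈ IndAlph l then
    (((IndAlph l).orderIsoOfFin rfl).symm ⟨i, h⟩ : Fin (IndAlph l).card) + 1
  else i + (IndAlph l).card + 1

lemma phi_pos (l : List Mon) (i : ℕ) : 1 ≤ phi l i := by
  unfold phi; split_ifs <;> omega

lemma phi_inj (l : List Mon) : Function.Injective (phi l) := by
  intro a b hab
  unfold phi at hab
  split_ifs at hab with ha hb hb
  · have h1 : (((IndAlph l).orderIsoOfFin rfl).symm ⟨a, ha⟩) =
        (((IndAlph l).orderIsoOfFin rfl).symm ⟨b, hb⟩) := Fin.ext (by omega)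
    have h2 := congrArg ((IndAlph l).orderIsoOfFin rfl) h1
    rw [OrderIso.apply_symm_apply, OrderIso.apply_symm_apply] at h2
    exact congrArg Subtype.val h2
  · have := (((IndAlph l).orderIsoOfFin rfl).symm ⟨a, ha⟩).isLt; omega
  · have := (((IndAlph l).orderIsoOfFin rfl).symm ⟨b, hb⟩).isLt; omega
  · omega

/-- Action of the compacting operator of `l` on a single monomial. -/
noncomputable def cptMon (l : List Mon) (m : Mon) : Mon :=
  ⟨m.1.mapDomain (phi l), by
    constructor
    · intro h
      apply m.2.1
      exact Finsupp.mapDomain_injective (phi_inj l) (by simpa using h)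
    · apply Finsupp.mapDomain_notin_range
      rintro ⟨i, hi⟩
      have := phi_pos l i
      omega⟩

/-- The compacting operator on lists of monomials. -/
noncomputable def cpt (l : List Mon) : List Mon := l.map (cptMon l)

/-- `sub l I` is the sublist of `l` consisting of the entries whose (1-based) position
belongs to `I`. -/
def sub (l : List Mon) (I : Finset ℕ) : List Mon :=
  (List.range l.length).filterMap fun j => if j + 1 ∈ I then l[j]? else none

/-- `∗̄`-irreducible lists: nonempty and with no factorization into two nonempty lists. -/
def SIrred (l : List Mon) : Prop :=
  l ≠ [] ∧ ∀ u v : List Mon, l = sconc u v → u = [] ∨ v = []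

end Mon

/-- The free `k`-module on the set of lists of monomials. -/
abbrev FreeL (k : Type*) [CommRing k] : Type _ := (List Mon) →₀ k

/-- Weight of a list: sum of the weights of its entries. -/
def wl {A : Type*} (w : A → ℕ) (l : List A) : ℕ := (l.map w).sum

/-- The twisted law `↑` on basis lists, with crossing parameter `qc` and
superposition parameter `qs`. -/
noncomputable def tw {A : Type*} [Mul A] (k : Type*) [CommRing k] (qc qs : k) (w : A → ℕ) :
    List A → List A → (List A →₀ k)
  | u, [] => Finsupp.single u 1
  | [], b :: v => Finsupp.single (b :: v) 1
  | a :: u, b :: v =>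
      Finsupp.mapDomain (a :: ·) (tw k qc qs w u (b :: v))
        + qc ^ (wl w (a :: u) * w b) • Finsupp.mapDomain (b :: ·) (tw k qc qs w (a :: u) v)
        + (qc ^ (wl w u * w b) * qs ^ (w a * w b)) •
            Finsupp.mapDomain ((a * b) :: ·) (tw k qc qs w u v)
  termination_by u v => u.length + v.length
  decreasing_by all_goals simp <;> omega

/-- The bilinear extension of the twisted law `↑` to the free module on lists. -/
noncomputable def twL {A : Type*} [Mul A] (k : Type*) [CommRing k] (qc qs : k) (w : A → ℕ) :
    (List A →₀ k) →ₗ[k] (List A →₀ k) →ₗ[k] (List A →₀ k) :=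
  Finsupp.lift _ k _ fun u => Finsupp.lift _ k _ fun v => tw k qc qs w u v

/-- The deformed shifted law `↑̄` on basis lists: `u ↑̄ v = u ↑ T_{maxInd u} v`. -/
noncomputable def twbar (k : Type*) [CommRing k] (qc qs : k) (u v : List Mon) : FreeL k :=
  tw k qc qs Mon.w u (v.map (Mon.Tmon (Mon.maxInd u)))

/-- The bilinear extension of the deformed shifted law `↑̄` to the free module. -/
noncomputable def twbarL (k : Type*) [CommRing k] (qc qs : k) :
    FreeL k →ₗ[k] FreeL k →ₗ[k] FreeL k :=
  Finsupp.lift _ k _ fun u => Finsupp.lift _ k _ fun v => twbar k qc qs u v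

/-- The `k`-submodule of `k⟨L⟩` spanned by the compact lists. -/
noncomputable def CompSpan (k : Type*) [CommRing k] : Submodule k (FreeL k) :=
  Submodule.span k {x : FreeL k | ∃ l : List Mon, Mon.Compact l ∧ x = Finsupp.single l 1}

section Aux

lemma IndAlph_nil' : Mon.IndAlph [] = ∅ := rfl

lemma IndAlph_cons' (a : Mon) (l : List Mon) :
    Mon.IndAlph (a :: l) = a.1.support ∪ Mon.IndAlph l := rfl

lemma mon_mul_support (a b : Mon) : (a * b).1.support = a.1.support ∪ b.1.support := by
  classical
  show (a.1 + b.1).support = _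
  ext i
  simp [Finsupp.mem_support_iff, Finsupp.add_apply]
  omega

lemma tw_support_IndAlph (k : Type*) [CommRing k] (qc qs : k) :
    ∀ u v : List Mon, ∀ l ∈ (tw k qc qs Mon.w u v).support,
      Mon.IndAlph l = Mon.IndAlph u ∪ Mon.IndAlph v
  | u, [] => by
      classical
      intro l hl
      rw [tw] at hl
      have := Finsupp.support_single_subset hl
      simp only [Finset.mem_singleton] at this
      subst this
      simp [IndAlph_nil']
  | [], b :: v => by
      classical
      intro l hl
      rw [tw] at hl
      have := Finsupp.support_single_subset hl
      simp only [Finset.mem_singleton] at this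
      subst this
      simp [IndAlph_nil']
  | a :: u, b :: v => by
      classical
      intro l hl
      rw [tw] at hl
      rcases Finset.mem_union.mp (Finsupp.support_add hl) with h | h
      · rcases Finset.mem_union.mp (Finsupp.support_add h) with h | h
        · obtain ⟨l', hl', rfl⟩ := Finset.mem_image.mp (Finsupp.mapDomain_support h)
          have ih := tw_support_IndAlph k qc qs u (b :: v) l' hl'
          rw [IndAlph_cons', ih, IndAlph_cons', IndAlph_cons']
          ext i; simp only [Finset.mem_union]; tauto
        · have h2 := Finsupp.support_smul h
          obtain ⟨l', hl', rfl⟩ := Finset.mem_image.mp (Finsupp.mapDomain_support h2)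
          have ih := tw_support_IndAlph k qc qs (a :: u) v l' hl'
          rw [IndAlph_cons', ih, IndAlph_cons', IndAlph_cons']
          ext i; simp only [Finset.mem_union]; tauto
      · have h2 := Finsupp.support_smul h
        obtain ⟨l', hl', rfl⟩ := Finset.mem_image.mp (Finsupp.mapDomain_support h2)
        have ih := tw_support_IndAlph k qc qs u v l' hl'
        rw [IndAlph_cons', ih, mon_mul_support, IndAlph_cons', IndAlph_cons']
        ext i; simp only [Finset.mem_union]; tauto
  termination_by u v => u.length + v.length
  decreasing_by all_goals simp <;> omega

lemma IndAlph_map_Tmon (p : ℕ) : ∀ v : List Mon,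
    Mon.IndAlph (v.map (Mon.Tmon p)) = (Mon.IndAlph v).map (Mon.addEmb p)
  | [] => by simp [IndAlph_nil']
  | b :: v => by
      classical
      rw [List.map_cons, IndAlph_cons', IndAlph_cons', IndAlph_map_Tmon p v,
        Finset.map_union]
      congr 1

lemma sup_Icc_id (p : ℕ) : (Finset.Icc 1 p).sup id = p := by
  rcases Nat.eq_zero_or_pos p with h | h
  · subst h; simp
  · refine le_antisymm (Finset.sup_le fun i hi => (Finset.mem_Icc.mp hi).2) ?_
    exact Finset.le_sup (f := id) (Finset.mem_Icc.mpr ⟨h, le_refl p⟩)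

lemma compact_nil : Mon.Compact ([] : List Mon) := by
  simp [Mon.Compact, IndAlph_nil']

lemma twbar_support_compact (k : Type*) [CommRing k] (qc qs : k)
    (u v : List Mon) (hu : Mon.Compact u) (hv : Mon.Compact v) :
    ∀ l ∈ (twbar k qc qs u v).support, Mon.Compact l := by
  intro l hl
  set p := (Mon.IndAlph u).card with hp
  set q := (Mon.IndAlph v).card with hq
  have hmax : Mon.maxInd u = p := by
    rw [Mon.maxInd, hu, ← hp]; exact sup_Icc_id p
  have h1 : Mon.IndAlph l
      = Mon.IndAlph u ∪ Mon.IndAlph (v.map (Mon.Tmon (Mon.maxInd u))) :=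
    tw_support_IndAlph k qc qs _ _ l hl
  rw [IndAlph_map_Tmon, hmax, hu, hv, ← hp, ← hq] at h1
  have h2 : Mon.IndAlph l = Finset.Icc 1 (p + q) := by
    rw [h1]
    ext i
    have hE : ∀ x, Mon.addEmb p x = x + p := fun x => rfl
    simp only [Finset.mem_union, Finset.mem_map, Finset.mem_Icc, hE,
      Function.Embedding.coeFn_mk]
    constructor
    · rintro (h | ⟨a, ha, rfl⟩) <;> omega
    · intro h
      rcases le_or_gt i p with h' | h'
      · left; omega
      · right; exact ⟨i - p, by omega, by omega⟩
  have h3 : (Mon.IndAlph l).card = p + q := by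
    rw [h2, Nat.card_Icc]; omega
  unfold Mon.Compact
  rw [h3, h2]

lemma mem_compSpan_of_support {k : Type*} [CommRing k] (f : FreeL k)
    (h : ∀ l ∈ f.support, Mon.Compact l) : f ∈ CompSpan k := by
  rw [← Finsupp.sum_single f, Finsupp.sum]
  refine Submodule.sum_mem _ fun l hl => ?_
  have : Finsupp.single l (f l) = (f l) • Finsupp.single l (1 : k) := by
    rw [Finsupp.smul_single, smul_eq_mul, mul_one]
  rw [this]
  exact Submodule.smul_mem _ _ (Submodule.subset_span ⟨l, h l hl, rfl⟩)

lemma twbarL_single (k : Type*) [CommRing k] (qc qs : k) (u v : List Mon) (a c : k) :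
    twbarL k qc qs (Finsupp.single u a) (Finsupp.single v c)
      = (a * c) • twbar k qc qs u v := by
  simp [twbarL, Finsupp.lift_apply, Finsupp.sum_single_index, mul_smul]

lemma Tmon_zero (m : Mon) : Mon.Tmon 0 m = m := by
  apply Subtype.ext
  show Finsupp.embDomain (Mon.addEmb 0) m.1 = m.1
  ext i
  have h : (Mon.addEmb 0) i = i := rfl
  calc Finsupp.embDomain (Mon.addEmb 0) m.1 i
      = Finsupp.embDomain (Mon.addEmb 0) m.1 ((Mon.addEmb 0) i) := by rw [h]
    _ = m.1 i := Finsupp.embDomain_apply_self _ _ _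

lemma tw_nil_left (k : Type*) [CommRing k] (qc qs : k) (v : List Mon) :
    tw k qc qs Mon.w [] v = Finsupp.single v 1 := by
  cases v <;> rw [tw]

lemma twbar_nil_left (k : Type*) [CommRing k] (qc qs : k) (v : List Mon) :
    twbar k qc qs [] v = Finsupp.single v 1 := by
  rw [twbar]
  have : v.map (Mon.Tmon (Mon.maxInd [])) = v := by
    have hm : Mon.maxInd ([] : List Mon) = 0 := by simp [Mon.maxInd, IndAlph_nil']
    rw [hm]
    calc v.map (Mon.Tmon 0) = v.map id := List.map_congr_left fun m _ => Tmon_zero m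
      _ = v := List.map_id v
  rw [this, tw_nil_left]

lemma twbar_nil_right (k : Type*) [CommRing k] (qc qs : k) (u : List Mon) :
    twbar k qc qs u [] = Finsupp.single u 1 := by
  rw [twbar, List.map_nil, tw]

end Aux

/-- ** Statement 17 **: the deformed shifted product of two compact lists is a linear
combination of compact lists; consequently the span of the compact lists is a unital
subalgebra of `(k⟨L⟩, ↑̄)` with unit the empty list. -/
theorem compact_span_subalgebra (k : Type*) [CommRing k] (qc qs : k) :
    (∀ u v : List Mon, Mon.Compact u → Mon.Compact v →
        ∀ l ∈ (twbar k qc qs u v).support, Mon.Compact l) ∧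
    Finsupp.single ([] : List Mon) (1 : k) ∈ CompSpan k ∧
    (∀ x ∈ CompSpan k, ∀ y ∈ CompSpan k, twbarL k qc qs x y ∈ CompSpan k) ∧
    (∀ x ∈ CompSpan k,
        twbarL k qc qs (Finsupp.single [] 1) x = x ∧
        twbarL k qc qs x (Finsupp.single [] 1) = x) := by
  have hunitL : twbarL k qc qs (Finsupp.single [] 1) = LinearMap.id := by
    apply Finsupp.lhom_ext
    intro v c
    rw [twbarL_single, twbar_nil_left, one_mul, LinearMap.id_apply,
      Finsupp.smul_single, smul_eq_mul, mul_one]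
  have hunitR : (twbarL k qc qs).flip (Finsupp.single [] 1) = LinearMap.id := by
    apply Finsupp.lhom_ext
    intro u c
    rw [LinearMap.flip_apply, twbarL_single, twbar_nil_right, mul_one,
      LinearMap.id_apply, Finsupp.smul_single, smul_eq_mul, mul_one]
  refine ⟨twbar_support_compact k qc qs, ?_, ?_, ?_⟩
  · exact Submodule.subset_span ⟨[], compact_nil, rfl⟩
  · intro x hx
    induction hx using Submodule.span_induction with
    | mem x hxmem =>
        intro y hy
        induction hy using Submodule.span_induction with
        | mem y hymem =>
            obtain ⟨u, hu, rfl⟩ := hxmem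
            obtain ⟨v, hv, rfl⟩ := hymem
            rw [twbarL_single, one_mul]
            exact Submodule.smul_mem _ _
              (mem_compSpan_of_support _ (twbar_support_compact k qc qs u v hu hv))
        | zero => simp
        | add y z _ _ ihy ihz =>
            rw [map_add]; exact Submodule.add_mem _ ihy ihz
        | smul c y _ ihy =>
            rw [map_smul]; exact Submodule.smul_mem _ _ ihy
    | zero => intro y hy; simp
    | add x z _ _ ihx ihz =>
        intro y hy
        rw [map_add, LinearMap.add_apply]
        exact Submodule.add_mem _ (ihx y hy) (ihz y hy)
    | smul c x _ ihx =>
        intro y hy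
        rw [map_smul, LinearMap.smul_apply]
        exact Submodule.smul_mem _ _ (ihx y hy)
  · intro x _
    constructor
    · rw [hunitL, LinearMap.id_apply]
    · have := congrArg (fun f => f x) hunitR
      simpa using this
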